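/- Let A be an abelian group such that Â = lim A/mA has finite exponent. Then there exists a positive integer m₀ such that the natural map A/m₀A → Â is an isomorphism. -/

import Mathlib

/-- The subgroup `nA` of an abelian group `A`. -/
def nsub (A : Type) [AddCommGroup A] (n : ℕ) : AddSubgroup A :=
  AddMonoidHom.range (n • AddMonoidHom.id A)

theorem nsub_le (A : Type) [AddCommGroup A] {m n : ℕ} (h : m ∣ n) :
    nsub A n ≤ nsub A m := by
  rintro x ⟨a, rfl⟩
  obtain ⟨k, rfl⟩ := h
  exact ⟨k • a, by simp [mul_smul]⟩

/-- Transition map `A/nA → A/mA` for `m ∣ n`. -/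
def transMap (A : Type) [AddCommGroup A] {m n : ℕ} (h : m ∣ n) :
    (A ⧸ nsub A n) →+ (A ⧸ nsub A m) :=
  QuotientAddGroup.map _ _ (AddMonoidHom.id A) (fun x hx => nsub_le A h hx)

theorem transMap_mk (A : Type) [AddCommGroup A] {m n : ℕ} (h : m ∣ n) (a : A) :
    transMap A h ((a : A ⧸ nsub A n)) = (a : A ⧸ nsub A m) := rfl

theorem mem_nsub_iff (A : Type) [AddCommGroup A] {n : ℕ} {x : A} :
    x ∈ nsub A n ↔ ∃ a : A, n • a = x := by
  simp [nsub, AddMonoidHom.mem_range]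

/-- If `Â = lim A/mA` has finite exponent, then there is a positive integer `m₀`
such that the natural map `A/m₀A → Â` is an isomorphism: the diagonal map `A → Â`
is surjective and its kernel is exactly `m₀A`. -/
theorem statement1 (A : Type) [AddCommGroup A]
    (hexp : ∃ e : ℕ, 0 < e ∧ ∀ f : ∀ m : ℕ+, A ⧸ nsub A m,
      (∀ (m n : ℕ+) (h : (m : ℕ) ∣ (n : ℕ)), transMap A h (f n) = f m) → e • f = 0) :
    ∃ m₀ : ℕ+,
      (∀ f : ∀ m : ℕ+, A ⧸ nsub A m,
        (∀ (m n : ℕ+) (h : (m : ℕ) ∣ (n : ℕ)), transMap A h (f n) = f m) →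
        ∃ a : A, (fun m : ℕ+ => ((a : A ⧸ nsub A m))) = f) ∧
      (∀ a : A, (∀ m : ℕ+, ((a : A ⧸ nsub A m)) = 0) ↔ a ∈ nsub A m₀) := by
  obtain ⟨e, he, hkill⟩ := hexp
  -- Key: `e • a ∈ mA` for every `m`, by applying `hkill` to the diagonal family.
  have K : ∀ (a : A) (m : ℕ+), e • a ∈ nsub A (m : ℕ) := by
    intro a m
    have h0 := hkill (fun m => (a : A ⧸ nsub A m)) (fun m n h => rfl)
    have h1 := congrFun h0 m
    simp only [Pi.smul_apply, Pi.zero_apply] at h1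
    rw [← QuotientAddGroup.mk_nsmul (nsub A (m : ℕ)) a e] at h1
    exact (QuotientAddGroup.eq_zero_iff _).mp h1
  refine ⟨⟨e, he⟩, ?_, ?_⟩
  · intro f hf
    obtain ⟨a, ha⟩ := QuotientAddGroup.mk_surjective (f ⟨e, he⟩)
    refine ⟨a, funext fun m => ?_⟩
    obtain ⟨b, hb⟩ := QuotientAddGroup.mk_surjective (f (⟨e, he⟩ * m))
    have hdvd1 : ((m : ℕ)) ∣ (((⟨e, he⟩ * m : ℕ+)) : ℕ) := ⟨e, (PNat.mul_coe _ _).trans (mul_comm _ _)⟩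
    have hdvd2 : (((⟨e, he⟩ : ℕ+)) : ℕ) ∣ (((⟨e, he⟩ * m : ℕ+)) : ℕ) := ⟨m, PNat.mul_coe _ _⟩
    have h1 := hf _ _ hdvd1
    have h2 := hf _ _ hdvd2
    rw [← hb] at h1 h2
    rw [transMap_mk] at h1
    have h2 : ((b : A ⧸ nsub A e)) = f ⟨e, he⟩ := h2
    have hab : a - b ∈ nsub A e := QuotientAddGroup.eq_iff_sub_mem.mp (ha.trans h2.symm)
    obtain ⟨c, hc⟩ := (mem_nsub_iff A).mp hab
    have hab' : a - b ∈ nsub A ((m : ℕ)) := by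
      have hk := K c m
      rwa [hc] at hk
    exact (QuotientAddGroup.eq_iff_sub_mem.mpr hab').trans h1
  · intro a
    constructor
    · intro h
      exact (QuotientAddGroup.eq_zero_iff a).mp (h ⟨e, he⟩)
    · intro ha m
      obtain ⟨c, hc⟩ := (mem_nsub_iff A).mp (ha : a ∈ nsub A e)
      have hc' : e • c = a := hc
      have hk := K c m
      rw [hc'] at hk
      exact (QuotientAddGroup.eq_zero_iff a).mpr hk
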